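/- Let C ⊆ E be a strict convex cone in a finite-dimensional real normed vector space. Then there exists a constant c > 0 such that for any finite collection x₁,…,x_k ∈ C, one has ∑ᵢ ‖xᵢ‖ ≤ c · ‖∑ᵢ xᵢ‖. -/

import Mathlib

open Filter Finset Module Topology

/-- For a strict convex cone `C` in a finite-dimensional real normed space
there is `c > 0` with `∑ ‖xᵢ‖ ≤ c ‖∑ xᵢ‖` for all finite families in `C`. -/
theorem stmt2 {E : Type*} [NormedAddCommGroup E] [NormedSpace ℝ E] [FiniteDimensional ℝ E]
    (C : Set E)
    (hscale : ∀ r : ℝ, 0 < r → ∀ x ∈ C, r • x ∈ C)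
    (hadd : ∀ x ∈ C, ∀ y ∈ C, x + y ∈ C)
    (hstrict : ¬ ∃ (p v : E), v ≠ 0 ∧ ∀ t : ℝ, p + t • v ∈ closure C) :
    ∃ c : ℝ, 0 < c ∧ ∀ (k : ℕ) (x : Fin k → E), (∀ i, x i ∈ C) →
      ∑ i, ‖x i‖ ≤ c * ‖∑ i, x i‖ := by
  classical
  by_cases htriv : ∀ x ∈ C, x = (0 : E)
  · refine ⟨1, one_pos, fun k x hx => ?_⟩
    have hz : ∀ i, x i = 0 := fun i => htriv _ (hx i)
    simp [hz]
  push_neg at htriv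
  obtain ⟨x₀, hx₀C, hx₀ne⟩ := htriv
  set D := closure C with hDdef
  have hDclosed : IsClosed D := isClosed_closure
  have hDscale : ∀ r : ℝ, 0 < r → ∀ x ∈ D, r • x ∈ D := by
    intro r hr x hx
    exact map_mem_closure (continuous_const_smul r) hx (fun y hy => hscale r hr y hy)
  have hDadd : ∀ x ∈ D, ∀ y ∈ D, x + y ∈ D := by
    intro x hx y hy
    exact map_mem_closure₂ continuous_add hx hy (fun a ha b hb => hadd a ha b hb)
  have h0D : (0 : E) ∈ D := by
    have htend : Tendsto (fun m : ℕ => (1 / ((m : ℝ) + 1)) • x₀) atTop (𝓝 (0 : E)) := by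
      have h1 : Tendsto (fun m : ℕ => 1 / ((m : ℝ) + 1)) atTop (𝓝 0) :=
        tendsto_one_div_add_atTop_nhds_zero_nat
      simpa using h1.smul_const x₀
    exact mem_closure_of_tendsto htend
      (Filter.Eventually.of_forall fun m => hscale _ (by positivity) _ hx₀C)
  have hpointed : ∀ x, x ∈ D → -x ∈ D → x = 0 := by
    intro x hxD hnxD
    by_contra hne
    refine hstrict ⟨0, x, hne, fun t => ?_⟩
    rw [zero_add]
    rcases lt_trichotomy t 0 with ht | ht | ht
    · have : t • x = (-t) • (-x) := by simp
      rw [this]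
      exact hDscale (-t) (by linarith) _ hnxD
    · rw [ht, zero_smul]; exact h0D
    · exact hDscale t ht _ hxD
  -- the compact base K
  set K : Set E := D ∩ {x : E | ‖x‖ = 1} with hKdef
  have hKclosed : IsClosed K := hDclosed.inter (isClosed_eq continuous_norm continuous_const)
  have hKcomp : IsCompact K := by
    refine Metric.isCompact_iff_isClosed_bounded.2 ⟨hKclosed, ?_⟩
    refine (Metric.isBounded_closedBall (x := (0 : E)) (r := 1)).subset fun y hy => ?_
    exact mem_closedBall_zero_iff.2 hy.2.le
  have hk₀K : (‖x₀‖⁻¹ • x₀) ∈ K := by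
    have hpos : (0 : ℝ) < ‖x₀‖ := norm_pos_iff.2 hx₀ne
    refine ⟨hDscale _ (inv_pos.2 hpos) _ (subset_closure hx₀C), ?_⟩
    simp [norm_smul, abs_of_pos (inv_pos.2 hpos), inv_mul_cancel₀ hpos.ne']
  set k₀ : E := ‖x₀‖⁻¹ • x₀ with hk₀def
  set n : ℕ := finrank ℝ E + 1 with hndef
  set g : (Fin n → ℝ) × (Fin n → E) → E := fun p => ∑ i, p.1 i • p.2 i with hgdef
  set S : Set ((Fin n → ℝ) × (Fin n → E)) :=
    stdSimplex ℝ (Fin n) ×ˢ Set.pi Set.univ (fun _ : Fin n => K) with hSdef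
  have hScomp : IsCompact S := (isCompact_stdSimplex ℝ (Fin n)).prod (isCompact_univ_pi fun _ => hKcomp)
  have hgcont : Continuous g := by
    refine continuous_finset_sum _ fun i _ => ?_
    exact ((continuous_apply i).comp continuous_fst).smul ((continuous_apply i).comp continuous_snd)
  -- Carathéodory: the convex hull of K is contained in the image of S
  have hsub : convexHull ℝ K ⊆ g '' S := by
    intro x hxm
    obtain ⟨ι, hfin, z, w, hzK, haff, hwpos, hwsum, hxeq⟩ :=
      eq_pos_convex_span_of_mem_convexHull hxm
    have hcard : Fintype.card ι ≤ n := by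
      have h1 := haff.card_le_finrank_succ
      have h2 : finrank ℝ (vectorSpan ℝ (Set.range z)) ≤ finrank ℝ E :=
        (vectorSpan ℝ (Set.range z)).finrank_le
      omega
    have hcards : Fintype.card (ι ⊕ Fin (n - Fintype.card ι)) = n := by
      simp only [Fintype.card_sum, Fintype.card_fin]
      omega
    let e := Fintype.equivFinOfCardEq hcards
    refine ⟨(Sum.elim w 0 ∘ e.symm, Sum.elim z (fun _ => k₀) ∘ e.symm), ⟨⟨?_, ?_⟩, ?_⟩, ?_⟩
    · intro j
      simp only [Function.comp_apply]
      obtain i | i := e.symm j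
      · exact (hwpos i).le
      · exact le_rfl
    · calc ∑ j, (Sum.elim w 0 ∘ e.symm) j = ∑ i, Sum.elim w (0 : Fin (n - Fintype.card ι) → ℝ) i :=
            Equiv.sum_comp e.symm _
        _ = 1 := by
            rw [Fintype.sum_sum_type]
            simpa using hwsum
    · intro i _
      simp only [Function.comp_apply]
      obtain i' | i' := e.symm i
      · exact hzK (Set.mem_range_self i')
      · exact hk₀K
    · show ∑ j, (Sum.elim w 0 ∘ e.symm) j • (Sum.elim z (fun _ => k₀) ∘ e.symm) j = x
      calc ∑ j, (Sum.elim w 0 ∘ e.symm) j • (Sum.elim z (fun _ => k₀) ∘ e.symm) j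
          = ∑ i, Sum.elim w (0 : Fin (n - Fintype.card ι) → ℝ) i • Sum.elim z (fun _ => k₀) i :=
            Equiv.sum_comp e.symm (fun i => Sum.elim w 0 i • Sum.elim z (fun _ => k₀) i)
        _ = x := by
            rw [Fintype.sum_sum_type]
            simpa using hxeq
  -- 0 is not in the image of S
  have h0img : (0 : E) ∉ g '' S := by
    rintro ⟨⟨w, z⟩, ⟨⟨hw0, hw1⟩, hzK⟩, hsum0⟩
    have hsum0' : ∑ i, w i • z i = 0 := hsum0
    obtain ⟨j, _, hj⟩ := Finset.exists_ne_zero_of_sum_ne_zero (by rw [hw1]; exact one_ne_zero)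
    have hjpos : 0 < w j := lt_of_le_of_ne (hw0 j) (Ne.symm hj)
    have hzjK : z j ∈ K := hzK j (Set.mem_univ j)
    have hzjne : z j ≠ 0 := by
      intro h
      have := hzjK.2
      rw [h] at this
      simp at this
    set y : E := w j • z j with hydef
    have hyD : y ∈ D := hDscale _ hjpos _ hzjK.1
    have hyne : y ≠ 0 := smul_ne_zero hj hzjne
    have hsplit : ∑ i ∈ Finset.univ.erase j, w i • z i = -y := by
      have := Finset.sum_erase_add Finset.univ (fun i => w i • z i) (Finset.mem_univ j)
      rw [hsum0'] at this
      exact eq_neg_of_add_eq_zero_left this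
    have hnyD : -y ∈ D := by
      rw [← hsplit]
      refine Finset.sum_induction _ (· ∈ D) (fun a b ha hb => hDadd a ha b hb) h0D ?_
      intro i _
      rcases eq_or_lt_of_le (hw0 i) with h | h
      · have h' : w i = 0 := h.symm
        rw [h', zero_smul]; exact h0D
      · exact hDscale _ h _ ((hzK i (Set.mem_univ i)).1)
    exact hyne (hpointed y hyD hnyD)
  -- separate 0 from the closed convex hull of K
  have h0T : (0 : E) ∉ closure (convexHull ℝ K) := fun h =>
    h0img (closure_minimal hsub (hScomp.image hgcont).isClosed h)
  obtain ⟨f, u, hfu, hub⟩ := geometric_hahn_banach_point_closed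
    (convex_convexHull ℝ K).closure isClosed_closure h0T
  have hupos : 0 < u := by simpa using hfu
  -- the key lower bound on D
  have hlow : ∀ x ∈ D, u * ‖x‖ ≤ f x := by
    intro x hxD
    rcases eq_or_ne x 0 with rfl | hne
    · simp
    · have hnorm : 0 < ‖x‖ := norm_pos_iff.2 hne
      have hmem : ‖x‖⁻¹ • x ∈ K := by
        refine ⟨hDscale _ (inv_pos.2 hnorm) _ hxD, ?_⟩
        simp [norm_smul, abs_of_pos (inv_pos.2 hnorm), inv_mul_cancel₀ hnorm.ne']
      have hlt : u < f (‖x‖⁻¹ • x) :=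
        hub _ (subset_closure (subset_convexHull ℝ K hmem))
      have heq : f (‖x‖⁻¹ • x) = ‖x‖⁻¹ * f x := by
        rw [map_smul]; simp
      rw [heq] at hlt
      have := mul_lt_mul_of_pos_left hlt hnorm
      rw [← mul_assoc, mul_inv_cancel₀ hnorm.ne', one_mul] at this
      linarith [this]
  refine ⟨(‖f‖ + 1) / u, div_pos (by positivity) hupos, fun k x hx => ?_⟩
  have h1 : u * ∑ i, ‖x i‖ ≤ f (∑ i, x i) := by
    rw [map_sum, Finset.mul_sum]
    exact Finset.sum_le_sum fun i _ => hlow _ (subset_closure (hx i))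
  have h2 : f (∑ i, x i) ≤ ‖f‖ * ‖∑ i, x i‖ := by
    calc f (∑ i, x i) ≤ |f (∑ i, x i)| := le_abs_self _
      _ = ‖f (∑ i, x i)‖ := (Real.norm_eq_abs _).symm
      _ ≤ ‖f‖ * ‖∑ i, x i‖ := f.le_opNorm _
  rw [div_mul_eq_mul_div, le_div_iff₀ hupos]
  nlinarith [norm_nonneg (∑ i, x i), norm_nonneg f]
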